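/- arXiv:1406.0098 — 5 statements merged into one kernel-verified Lean document; each statement's English description precedes it below -/
import Mathlib

section
/- Let R be a ring and (ψ_n)_{n<ω} a descending sequence of pp-formula data. Let (U_i)_{i∈I} and (V_j)_{j∈J} be families of left R-modules and f : ∏_{i∈I} U_i → ⊕_{j∈J} V_j a module homomorphism. Then there exist n₀ < ω, a finite number of ω₁-complete ultrafilters D₁, …, D_k on I, and a finite subset J′ of J such that f( ψ_{n₀}(∏_{i∈I} U_i) ∩ ⋂_{n=1}^{k} Ker(π_{D_n}) ) ⊆ ⊕_{j∈J′} V_j + ⋂_{n<ω} ψ_n(⊕_{j∈J} V_j). -/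
universe u

open Cardinal

/-- A pp-formula datum over `R`: numbers `n`, `k`, a vector `a : Fin n → R` and a
matrix `B : Fin k → Fin n → R`. -/
structure PPFormula (R : Type u) [Ring R] where
  n : ℕ
  k : ℕ
  a : Fin n → R
  B : Fin k → Fin n → R

/-- The pp-definable subgroup of `M` defined by the pp-formula datum `ψ`:
`{ m ∈ M : ∃ y, ∀ j, (a j) • m + ∑ i, (B i j) • y i = 0 }`. -/
def PPFormula.set {R : Type u} [Ring R] (ψ : PPFormula R)
    (M : Type u) [AddCommGroup M] [Module R M] : Set M :=
  {m | ∃ y : Fin ψ.k → M, ∀ j : Fin ψ.n, ψ.a j • m + ∑ i : Fin ψ.k, ψ.B i j • y i = 0}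

/-- A filter is `θ`-complete if it is closed under intersections of fewer than `θ`
of its members. -/
def FilterComplete {I : Type u} (F : Filter I) (θ : Cardinal.{u}) : Prop :=
  ∀ S : Set (Set I), #S < θ → (∀ s ∈ S, s ∈ F) → ⋂₀ S ∈ F

open DirectSum

/-- A sequence of pp-formula data is descending if `ψ_{n+1}(N) ⊆ ψ_n(N)` for every
left `R`-module `N`. -/
def PPDescending {R : Type u} [Ring R] (ψ : ℕ → PPFormula R) : Prop :=
  ∀ (n : ℕ) (N : Type u) [AddCommGroup N] [Module R N], (ψ (n + 1)).set N ⊆ (ψ n).set N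

namespace PP5

open scoped Classical

variable {R : Type u} [Ring R]

theorem zero_mem (φ : PPFormula R) (M : Type u) [AddCommGroup M] [Module R M] :
    (0 : M) ∈ φ.set M := ⟨0, fun j => by simp⟩

theorem add_mem {φ : PPFormula R} {M : Type u} [AddCommGroup M] [Module R M] {x y : M}
    (hx : x ∈ φ.set M) (hy : y ∈ φ.set M) : x + y ∈ φ.set M := by
  obtain ⟨w, hw⟩ := hx; obtain ⟨v, hv⟩ := hy
  refine ⟨w + v, fun j => ?_⟩
  have h : φ.a j • (x + y) + ∑ i : Fin φ.k, φ.B i j • (w + v) i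
      = (φ.a j • x + ∑ i : Fin φ.k, φ.B i j • w i)
        + (φ.a j • y + ∑ i : Fin φ.k, φ.B i j • v i) := by
    simp only [Pi.add_apply, smul_add, Finset.sum_add_distrib]
    abel
  rw [h, hw j, hv j, add_zero]

theorem neg_mem {φ : PPFormula R} {M : Type u} [AddCommGroup M] [Module R M] {x : M}
    (hx : x ∈ φ.set M) : -x ∈ φ.set M := by
  obtain ⟨w, hw⟩ := hx
  refine ⟨-w, fun j => ?_⟩
  have h : φ.a j • (-x) + ∑ i : Fin φ.k, φ.B i j • (-w) i
      = -(φ.a j • x + ∑ i : Fin φ.k, φ.B i j • w i) := by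
    simp only [Pi.neg_apply, smul_neg, Finset.sum_neg_distrib, neg_add]
  rw [h, hw j, neg_zero]

theorem sub_mem {φ : PPFormula R} {M : Type u} [AddCommGroup M] [Module R M] {x y : M}
    (hx : x ∈ φ.set M) (hy : y ∈ φ.set M) : x - y ∈ φ.set M := by
  rw [sub_eq_add_neg]; exact add_mem hx (neg_mem hy)

theorem sum_mem {φ : PPFormula R} {M : Type u} [AddCommGroup M] [Module R M]
    {α : Type*} (s : Finset α) (g : α → M) (h : ∀ a ∈ s, g a ∈ φ.set M) :
    ∑ a ∈ s, g a ∈ φ.set M :=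
  Finset.sum_induction g (· ∈ φ.set M) (fun _ _ ha hb => add_mem ha hb) (zero_mem φ M) h

theorem map_mem {φ : PPFormula R} {M N : Type u} [AddCommGroup M] [Module R M]
    [AddCommGroup N] [Module R N] (g : M →ₗ[R] N) {x : M} (hx : x ∈ φ.set M) :
    g x ∈ φ.set N := by
  obtain ⟨w, hw⟩ := hx
  refine ⟨fun t => g (w t), fun j => ?_⟩
  have h : φ.a j • g x + ∑ i : Fin φ.k, φ.B i j • g (w i)
      = g (φ.a j • x + ∑ i : Fin φ.k, φ.B i j • w i) := by
    rw [map_add, map_smul, map_sum]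
    simp only [map_smul]
  rw [h, hw j, map_zero]

theorem desc_subset {ψ : ℕ → PPFormula R} (hdesc : PPDescending ψ)
    (M : Type u) [AddCommGroup M] [Module R M] {m n : ℕ} (hmn : m ≤ n) :
    (ψ n).set M ⊆ (ψ m).set M := by
  induction hmn with
  | refl => exact subset_rfl
  | step _ ih => exact fun x hx => ih (hdesc _ _ hx)
  

section Pi

variable {I : Type u} {U : I → Type u} [∀ i, AddCommGroup (U i)] [∀ i, Module R (U i)]

theorem pi_mem_iff {φ : PPFormula R} (x : ∀ i, U i) :
    x ∈ φ.set (∀ i, U i) ↔ ∀ i, x i ∈ φ.set (U i) := by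
  constructor
  · rintro ⟨w, hw⟩ i
    refine ⟨fun t => w t i, fun j => ?_⟩
    have := congrFun (hw j) i
    simpa [Finset.sum_apply] using this
  · intro h
    choose w hw using h
    refine ⟨fun t i => w i t, fun j => funext fun i => ?_⟩
    simpa [Finset.sum_apply] using hw i j

/-- Restriction of an element of a product to a subset of the index set. -/
noncomputable def res (A : Set I) (x : ∀ i, U i) : ∀ i, U i :=
  fun i => if i ∈ A then x i else 0

theorem res_mem {φ : PPFormula R} (A : Set I) {x : ∀ i, U i}
    (hx : x ∈ φ.set (∀ i, U i)) : res A x ∈ φ.set (∀ i, U i) := by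
  rw [pi_mem_iff] at hx ⊢
  intro i
  by_cases h : i ∈ A
  · simpa [res, h] using hx i
  · simpa [res, h] using zero_mem φ (U i)

theorem res_eq_zero {A : Set I} {x : ∀ i, U i} {i : I} (h : i ∉ A) : res A x i = 0 :=
  if_neg h

theorem res_add_res {A : Set I} (x : ∀ i, U i) :
    x = res A x + res Aᶜ x := by
  funext i
  by_cases h : i ∈ A <;> simp [res, h]

theorem res_add_res' {A B : Set I} (x : ∀ i, U i) (hx : ∀ i, i ∉ B → x i = 0) (hAB : A ⊆ B) :
    x = res A x + res (B \ A) x := by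
  funext i
  by_cases h : i ∈ A
  · have : i ∉ B \ A := fun hc => hc.2 h
    simp [res, h, this]
  · by_cases h2 : i ∈ B
    · simp [res, h, Set.mem_diff, h2]
    · have : i ∉ B \ A := fun hc => h2 hc.1
      simp [res, h, this, hx i h2]

end Pi

section Proj

variable {J : Type u} {V : J → Type u} [∀ j, AddCommGroup (V j)] [∀ j, Module R (V j)]

/-- The linear projection of a direct sum killing the coordinates in `E`. -/
noncomputable def proj (E : Finset J) : (⨁ j, V j) →ₗ[R] (⨁ j, V j) where
  toFun v := v.filter (fun j => j ∉ E)
  map_add' v w := DFinsupp.filter_add _ v w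
  map_smul' r v := by
    refine DFinsupp.ext fun j => ?_
    by_cases h : j ∈ E <;>
      simp [DFinsupp.filter_apply, DirectSum.smul_apply, h]

theorem proj_apply (E : Finset J) (v : ⨁ j, V j) (j : J) :
    proj (R := R) E v j = if j ∉ E then v j else 0 :=
  DFinsupp.filter_apply _ _ _

theorem proj_proj {E E' : Finset J} (h : E ⊆ E') (v : ⨁ j, V j) :
    proj (R := R) E' (proj (R := R) E v) = proj (R := R) E' v := by
  refine DFinsupp.ext fun j => ?_
  simp only [proj_apply]
  by_cases h1 : j ∈ E'
  · simp [h1]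
  · have h2 : j ∉ E := fun hc => h1 (h hc)
    simp [h1, h2]

theorem proj_eq_zero (E : Finset J) (v : ⨁ j, V j) (h : ∀ j ∉ E, v j = 0) :
    proj (R := R) E v = 0 := by
  refine DFinsupp.ext fun j => ?_
  rw [proj_apply]
  by_cases h1 : j ∉ E
  · simp [h1, h j h1]
  · simp [h1]

theorem sub_proj_eq_zero (E : Finset J) (v : ⨁ j, V j) {j : J} (h : j ∉ E) :
    (v - proj (R := R) E v) j = 0 := by
  rw [DFinsupp.sub_apply, proj_apply, if_pos h, sub_self]

end Proj

section Main

variable {I J : Type u} {U : I → Type u} [∀ i, AddCommGroup (U i)] [∀ i, Module R (U i)]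
  {V : J → Type u} [∀ j, AddCommGroup (V j)] [∀ j, Module R (V j)]

/-- `A ⊆ I` is negligible with data `(n, E)`. -/
def SmallData (ψ : ℕ → PPFormula R) (f : (∀ i, U i) →ₗ[R] ⨁ j, V j) (n : ℕ) (E : Finset J)
    (A : Set I) : Prop :=
  ∀ x : ∀ i, U i, x ∈ (ψ n).set (∀ i, U i) → (∀ i, i ∉ A → x i = 0) →
    ∀ k, proj (R := R) E (f x) ∈ (ψ k).set (⨁ j, V j)

/-- `A ⊆ I` is negligible. -/
def Small (ψ : ℕ → PPFormula R) (f : (∀ i, U i) →ₗ[R] ⨁ j, V j) (A : Set I) : Prop :=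
  ∃ n E, SmallData ψ f n E A

variable {ψ : ℕ → PPFormula R} {f : (∀ i, U i) →ₗ[R] ⨁ j, V j}

theorem SmallData.mono (hdesc : PPDescending ψ) {n n' : ℕ} {E E' : Finset J} {A : Set I}
    (hn : n ≤ n') (hE : E ⊆ E') (h : SmallData ψ f n E A) : SmallData ψ f n' E' A := by
  intro x hx hs k
  have h1 := h x (desc_subset hdesc _ hn hx) hs k
  rw [← proj_proj hE]
  exact map_mem _ h1

theorem small_mono {A A' : Set I} (hA : A' ⊆ A) (h : Small ψ f A) : Small ψ f A' := by
  obtain ⟨n, E, h⟩ := h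
  exact ⟨n, E, fun x hx hs k => h x hx (fun i hi => hs i (fun hc => hi (hA hc))) k⟩

theorem small_empty : Small ψ f (∅ : Set I) := by
  refine ⟨0, ∅, fun x hx hs k => ?_⟩
  have hx0 : x = 0 := funext fun i => hs i (Set.notMem_empty i)
  rw [hx0, map_zero, map_zero]
  exact zero_mem _ _

theorem small_union (hdesc : PPDescending ψ) {A B : Set I}
    (hA : Small ψ f A) (hB : Small ψ f B) : Small ψ f (A ∪ B) := by
  obtain ⟨n1, E1, h1⟩ := hA
  obtain ⟨n2, E2, h2⟩ := hB
  refine ⟨max n1 n2, E1 ∪ E2, fun x hx hs k => ?_⟩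
  have key : x = res A x + res ((A ∪ B) \ A) x :=
    res_add_res' x hs Set.subset_union_left
  have hfx : f x = f (res A x) + f (res ((A ∪ B) \ A) x) := by
    rw [← map_add, ← key]
  have m1 : proj (R := R) (E1 ∪ E2) (f (res A x)) ∈ (ψ k).set (⨁ j, V j) :=
    (h1.mono hdesc (le_max_left n1 n2) Finset.subset_union_left)
      (res A x) (res_mem _ hx) (fun i hi => res_eq_zero hi) k
  have m2 : proj (R := R) (E1 ∪ E2) (f (res ((A ∪ B) \ A) x)) ∈ (ψ k).set (⨁ j, V j) := by
    refine (h2.mono hdesc (le_max_right n1 n2) Finset.subset_union_right)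
      (res ((A ∪ B) \ A) x) (res_mem _ hx) (fun i hi => ?_) k
    by_cases hc : i ∈ (A ∪ B) \ A
    · exact absurd hc.1 (fun hab => hab.elim (fun ha => hc.2 ha) hi)
    · exact res_eq_zero hc
  rw [hfx, map_add]
  exact add_mem m1 m2

theorem not_small_iff {A : Set I} : ¬ Small ψ f A ↔
    ∀ n E, ∃ x : ∀ i, U i, x ∈ (ψ n).set (∀ i, U i) ∧ ((∀ i, i ∉ A → x i = 0) ∧
      ∃ k, proj (R := R) E (f x) ∉ (ψ k).set (⨁ j, V j)) := by
  unfold Small SmallData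
  push_neg
  rfl

theorem cut_elem (hdesc : PPDescending ψ) {B : Set I} {nB : ℕ} {EB : Finset J}
    (hB : SmallData ψ f nB EB B) {n : ℕ} {E : Finset J} {x₀ : ∀ i, U i}
    (hx₀ : x₀ ∈ (ψ (max n nB)).set (∀ i, U i)) {k : ℕ}
    (hk : proj (R := R) (E ∪ EB) (f x₀) ∉ (ψ k).set (⨁ j, V j)) :
    res Bᶜ x₀ ∈ (ψ n).set (∀ i, U i) ∧ (∀ i, i ∈ B → res Bᶜ x₀ i = 0) ∧
      proj (R := R) E (f (res Bᶜ x₀)) ∉ (ψ k).set (⨁ j, V j) := by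
  refine ⟨res_mem _ (desc_subset hdesc _ (le_max_left n nB) hx₀),
    fun i hi => res_eq_zero (fun hc => hc hi), fun hmem => ?_⟩
  have e1 : proj (R := R) (E ∪ EB) (f (res Bᶜ x₀)) ∈ (ψ k).set (⨁ j, V j) := by
    rw [← proj_proj (Finset.subset_union_left (s₂ := EB))]
    exact map_mem _ hmem
  have e2 : proj (R := R) (E ∪ EB) (f (res B x₀)) ∈ (ψ k).set (⨁ j, V j) := by
    rw [← proj_proj (Finset.subset_union_right (s₁ := E))]
    refine map_mem _ (hB (res B x₀)
      (res_mem _ (desc_subset hdesc _ (le_max_right n nB) hx₀))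
      (fun i hi => res_eq_zero hi) k)
  have hfx : f x₀ = f (res B x₀) + f (res Bᶜ x₀) := by
    rw [← map_add, ← res_add_res]
  exact hk (by rw [hfx, map_add]; exact add_mem e2 e1)

/-- The diagonal contradiction lemma. -/
theorem DL (hdesc : PPDescending ψ) (x : ℕ → ∀ i, U i) (N k' : ℕ → ℕ) (E : ℕ → Finset J)
    (hxF : ∀ m, x m ∈ (ψ (N m)).set (∀ i, U i))
    (hN : StrictMono N) (hk : ∀ m, k' m ≤ N (m + 1))
    (hE : ∀ m, E m ⊆ E (m + 1))
    (hEs : ∀ m j, (f (x m)) j ≠ 0 → j ∈ E (m + 1))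
    (hPF : ∀ i, ∃ s, ∀ m, s ≤ m → x m i = 0)
    (hbad : ∀ m, proj (R := R) (E m) (f (x m)) ∉ (ψ (k' m)).set (⨁ j, V j)) : False := by
  choose σ hσ using hPF
  set tail : ℕ → ∀ i, U i := fun t i => ∑ m ∈ Finset.Ico t (σ i), x m i with htaildef
  have hEmono : ∀ {s t : ℕ}, s ≤ t → E s ⊆ E t := by
    intro s t hst
    induction hst with
    | refl => exact subset_rfl
    | step _ ih => exact ih.trans (hE _)
  have htailrec : ∀ t, tail t = x t + tail (t + 1) := by
    intro t; funext i
    show (∑ m ∈ Finset.Ico t (σ i), x m i) = x t i + ∑ m ∈ Finset.Ico (t + 1) (σ i), x m i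
    by_cases h : t < σ i
    · exact Finset.sum_eq_sum_Ico_succ_bot h _
    · push_neg at h
      rw [Finset.Ico_eq_empty (by omega), Finset.Ico_eq_empty (by omega)]
      simp [hσ i t h]
  have htailmem : ∀ t, tail t ∈ (ψ (N t)).set (∀ i, U i) := by
    intro t
    rw [pi_mem_iff]
    intro i
    refine sum_mem _ _ (fun m hm => ?_)
    have hmem := (pi_mem_iff (x m)).1 (hxF m) i
    exact desc_subset hdesc _ (hN.monotone (Finset.mem_Ico.1 hm).1) hmem
  have hsplit : ∀ t, f (tail 0) = (∑ m ∈ Finset.range t, f (x m)) + f (tail t) := by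
    intro t
    induction t with
    | zero => simp
    | succ t ih =>
      rw [ih, htailrec t, map_add, Finset.sum_range_succ]
      abel
  have hproj1 : ∀ t, proj (R := R) (E t) (f (tail 0)) = proj (R := R) (E t) (f (tail t)) := by
    intro t
    rw [hsplit t, map_add, map_sum]
    have hz : ∀ m ∈ Finset.range t, proj (R := R) (E t) (f (x m)) = 0 := by
      intro m hm
      refine proj_eq_zero _ _ (fun j hj => ?_)
      by_contra hne
      exact hj (hEmono (Nat.succ_le_of_lt (Finset.mem_range.1 hm)) (hEs m j hne))
    rw [Finset.sum_eq_zero hz, zero_add]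
  have hmem : ∀ t, proj (R := R) (E t) (f (tail 0)) ∈ (ψ (N t)).set (⨁ j, V j) := fun t => by
    rw [hproj1 t]; exact map_mem _ (map_mem f (htailmem t))
  have hnot : ∀ t, proj (R := R) (E t) (f (tail 0)) ∉ (ψ (k' t)).set (⨁ j, V j) := by
    intro t hin
    have h2 : proj (R := R) (E t) (f (tail (t + 1))) ∈ (ψ (k' t)).set (⨁ j, V j) :=
      map_mem _ (map_mem f (desc_subset hdesc _ (hk t) (htailmem (t + 1))))
    have h3 : proj (R := R) (E t) (f (x t)) ∈ (ψ (k' t)).set (⨁ j, V j) := by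
      have heq : proj (R := R) (E t) (f (x t))
          = proj (R := R) (E t) (f (tail 0)) - proj (R := R) (E t) (f (tail (t + 1))) := by
        rw [hproj1 t, htailrec t, map_add, map_add]
        abel
      rw [heq]; exact sub_mem hin h2
    exact hbad t h3
  set v0 := f (tail 0) with hv0
  set F := DFinsupp.support v0 with hF
  set t₀ := F.sup (fun j => if h : ∃ t, j ∈ E t then Nat.find h else 0) with ht₀
  have hstab : ∀ t, t₀ ≤ t → proj (R := R) (E t) v0 = proj (R := R) (E t₀) v0 := by
    intro t ht
    refine DFinsupp.ext fun j => ?_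
    rw [proj_apply, proj_apply]
    by_cases hv : v0 j = 0
    · simp [hv]
    · have hjF : j ∈ F := DFinsupp.mem_support_iff.2 hv
      by_cases hex : ∃ t', j ∈ E t'
      · have h1 : Nat.find hex ≤ t₀ := by
          have h2 := Finset.le_sup
            (f := fun j => if h : ∃ t, j ∈ E t then Nat.find h else 0) hjF
          simpa [hex] using h2
        have hj1 : j ∈ E t₀ := hEmono h1 (Nat.find_spec hex)
        have hj2 : j ∈ E t := hEmono (h1.trans ht) (Nat.find_spec hex)
        simp [hj1, hj2]
      · push_neg at hex
        simp [hex t, hex t₀]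
  obtain ⟨t, ht1, ht2⟩ : ∃ t, t₀ ≤ t ∧ k' t₀ ≤ N t :=
    ⟨max t₀ (k' t₀), le_max_left _ _, (le_max_right _ _).trans hN.le_apply⟩
  exact hnot t₀ (desc_subset hdesc _ ht2 (hstab t ht1 ▸ hmem t))

theorem depRec {α : Type*} (s₀ : α) (Q : α → α → Prop) (h : ∀ a, ∃ b, Q a b) :
    ∃ g : ℕ → α, g 0 = s₀ ∧ ∀ m, Q (g m) (g (m + 1)) := by
  choose F hF using h
  refine ⟨fun m => F^[m] s₀, rfl, fun m => ?_⟩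
  show Q (F^[m] s₀) (F^[m + 1] s₀)
  rw [Function.iterate_succ_apply']
  exact hF _

/-- Master recursion lemma: an avoidance predicate preserved by adding supports of
counterexamples leads to a contradiction via `DL`. -/
theorem MasterA (hdesc : PPDescending ψ) (Av : Set I → Prop) (hAv0 : Av ∅)
    (hstep : ∀ (n : ℕ) (E : Finset J) (B : Set I), Av B →
      ∃ x k, x ∈ (ψ n).set (∀ i, U i) ∧ (∀ i ∈ B, x i = 0) ∧
        Av (B ∪ {i | x i ≠ 0}) ∧ proj (R := R) E (f x) ∉ (ψ k).set (⨁ j, V j)) :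
    False := by
  let Q : {q : ℕ × Finset J × Set I // Av q.2.2} → {q : ℕ × Finset J × Set I // Av q.2.2} → Prop :=
    fun a b =>
    ∃ x k, x ∈ (ψ a.1.1).set (∀ i, U i) ∧ (∀ i ∈ a.1.2.2, x i = 0) ∧
      proj (R := R) a.1.2.1 (f x) ∉ (ψ k).set (⨁ j, V j) ∧
      b.1.1 = max (a.1.1 + 1) k ∧ b.1.2.1 = a.1.2.1 ∪ (f x).support ∧
      b.1.2.2 = a.1.2.2 ∪ {i | x i ≠ 0}
  have hQ : ∀ a, ∃ b, Q a b := by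
    intro a
    obtain ⟨x, k, h1, h2, h3, h4⟩ := hstep a.1.1 a.1.2.1 a.1.2.2 a.2
    exact ⟨⟨(max (a.1.1 + 1) k, a.1.2.1 ∪ (f x).support, a.1.2.2 ∪ {i | x i ≠ 0}), h3⟩,
      x, k, h1, h2, h4, rfl, rfl, rfl⟩
  obtain ⟨g, hg0, hgQ⟩ := depRec ⟨(0, ∅, ∅), hAv0⟩ Q hQ
  choose xs ks h1 h2 h3 h4 h5 h6 using hgQ
  have hBmono : ∀ {s t : ℕ}, s ≤ t → ((g s).1.2.2 : Set I) ⊆ (g t).1.2.2 := by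
    intro s t hst
    induction hst with
    | refl => exact subset_rfl
    | step _ ih =>
      refine ih.trans ?_
      rw [h6 _]
      exact Set.subset_union_left
  refine DL hdesc xs (fun m => (g m).1.1) ks (fun m => (g m).1.2.1) h1 ?_ ?_ ?_ ?_ ?_ h3
  · refine strictMono_nat_of_lt_succ (fun m => ?_)
    show (g m).1.1 < (g (m + 1)).1.1
    have := h4 m
    omega
  · intro m
    show ks m ≤ (g (m + 1)).1.1
    have := h4 m
    omega
  · intro m
    show (g m).1.2.1 ⊆ (g (m + 1)).1.2.1
    rw [h5 m]
    exact Finset.subset_union_left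
  · intro m j hne
    show j ∈ (g (m + 1)).1.2.1
    rw [h5 m]
    exact Finset.mem_union_right _ (DFinsupp.mem_support_iff.2 hne)
  · intro i
    by_cases hex : ∃ l, xs l i ≠ 0
    · obtain ⟨l, hl⟩ := hex
      refine ⟨l + 1, fun m hm => ?_⟩
      have hiB : i ∈ (g m).1.2.2 := by
        refine hBmono hm ?_
        rw [h6 l]
        exact Set.mem_union_right _ hl
      exact h2 m i hiB
    · push_neg at hex
      exact ⟨0, fun m _ => hex m⟩

/-- There is no infinite family of pairwise disjoint non-negligible sets. -/
theorem noInfDisjoint (hdesc : PPDescending ψ) (A : ℕ → Set I)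
    (hdisj : ∀ l m, l < m → ∀ i, i ∈ A l → i ∉ A m)
    (hpos : ∀ m, ¬ Small ψ f (A m)) : False := by
  have hdisj' : ∀ l m, l ≠ m → ∀ i, i ∈ A l → i ∉ A m := by
    intro l m hlm i hi hm
    rcases lt_or_gt_of_ne hlm with h | h
    · exact hdisj l m h i hi hm
    · exact hdisj m l h i hm hi
  refine MasterA (f := f) hdesc (fun B => ∃ s : Finset ℕ, B ⊆ ⋃ l ∈ s, A l) ⟨∅, by simp⟩ ?_
  rintro n E B ⟨s, hs⟩
  obtain ⟨m, hm⟩ := Infinite.exists_notMem_finset s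
  obtain ⟨x, hx1, hx2, k, hx3⟩ := not_small_iff.1 (hpos m) n E
  have hsupp : ∀ i, x i ≠ 0 → i ∈ A m := by
    intro i hi
    by_contra hiA
    exact hi (hx2 i hiA)
  refine ⟨x, k, hx1, ?_, ?_, hx3⟩
  · intro i hiB
    by_cases hiA : i ∈ A m
    · obtain ⟨l, hls, hil⟩ : ∃ l ∈ s, i ∈ A l := by simpa using hs hiB
      exact absurd hiA (hdisj' l m (fun he => hm (he ▸ hls)) i hil)
    · exact hx2 i hiA
  · refine ⟨insert m s, fun i hi => ?_⟩
    rcases hi with hiB | hix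
    · have h1 := hs hiB
      simp only [Set.mem_iUnion] at h1 ⊢
      obtain ⟨l, hls, hil⟩ := h1
      exact ⟨l, Finset.mem_insert_of_mem hls, hil⟩
    · simp only [Set.mem_iUnion]
      exact ⟨m, Finset.mem_insert_self m s, hsupp i hix⟩

/-- Negligible sets are closed under countable unions. -/
theorem small_iUnion (hdesc : PPDescending ψ) (Y : ℕ → Set I)
    (hY : ∀ m, Small ψ f (Y m)) : Small ψ f (⋃ m, Y m) := by
  by_contra hU
  have acc_zero : Set.accumulate Y 0 = Y 0 := by
    ext i; simp [Set.mem_accumulate, Nat.le_zero]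
  have acc_succ : ∀ m, Set.accumulate Y (m + 1) = Set.accumulate Y m ∪ Y (m + 1) := by
    intro m
    ext i
    simp only [Set.mem_accumulate, Set.mem_union]
    constructor
    · rintro ⟨y, hy, hi⟩
      rcases Nat.lt_or_ge y (m + 1) with h | h
      · exact Or.inl ⟨y, by omega, hi⟩
      · have : y = m + 1 := by omega
        exact Or.inr (this ▸ hi)
    · rintro (⟨y, hy, hi⟩ | hi)
      · exact ⟨y, by omega, hi⟩
      · exact ⟨m + 1, le_refl _, hi⟩
  have hZ : ∀ m, Small ψ f (Set.accumulate Y m) := by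
    intro m
    induction m with
    | zero => rw [acc_zero]; exact hY 0
    | succ m ih => rw [acc_succ m]; exact small_union hdesc ih (hY (m + 1))
  choose nZ EZ hZd using hZ
  rw [← Set.iUnion_accumulate] at hU
  have hUn := not_small_iff.1 hU
  let Q : (ℕ × ℕ × Finset J) → (ℕ × ℕ × Finset J) → Prop := fun a b =>
    ∃ x k, x ∈ (ψ a.2.1).set (∀ i, U i) ∧
      (∀ i, i ∉ (⋃ m, Set.accumulate Y m) \ Set.accumulate Y a.1 → x i = 0) ∧
      proj (R := R) a.2.2 (f x) ∉ (ψ k).set (⨁ j, V j) ∧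
      b.1 = a.1 + 1 ∧ b.2.1 = max (a.2.1 + 1) k ∧ b.2.2 = a.2.2 ∪ (f x).support
  have hQ : ∀ a, ∃ b, Q a b := by
    intro a
    obtain ⟨x₀, hx₀, hx₀s, k, hk⟩ := hUn (max a.2.1 (nZ a.1)) (a.2.2 ∪ EZ a.1)
    obtain ⟨c1, c2, c3⟩ := cut_elem hdesc (hZd a.1) hx₀ hk
    refine ⟨(a.1 + 1, max (a.2.1 + 1) k, a.2.2 ∪ (f (res (Set.accumulate Y a.1)ᶜ x₀)).support),
      res (Set.accumulate Y a.1)ᶜ x₀, k, c1, ?_, c3, rfl, rfl, rfl⟩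
    intro i hi
    by_cases hiZ : i ∈ Set.accumulate Y a.1
    · exact c2 i hiZ
    · have hiU : i ∉ ⋃ m, Set.accumulate Y m := fun hc => hi ⟨hc, hiZ⟩
      have hx0i : x₀ i = 0 := hx₀s i hiU
      show res (Set.accumulate Y a.1)ᶜ x₀ i = 0
      unfold res
      split <;> simp [hx0i]
  obtain ⟨g, hg0, hgQ⟩ := depRec (0, 0, ∅) Q hQ
  choose xs ks h1 h2 h3 h4 h5 h6 using hgQ
  have hcnt : ∀ m, (g m).1 = m := by
    intro m
    induction m with
    | zero => rw [hg0]
    | succ m ih => rw [h4 m, ih]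
  refine DL hdesc xs (fun m => (g m).2.1) ks (fun m => (g m).2.2) h1 ?_ ?_ ?_ ?_ ?_ h3
  · refine strictMono_nat_of_lt_succ (fun m => ?_)
    show (g m).2.1 < (g (m + 1)).2.1
    have := h5 m
    omega
  · intro m
    show ks m ≤ (g (m + 1)).2.1
    have := h5 m
    omega
  · intro m
    show (g m).2.2 ⊆ (g (m + 1)).2.2
    rw [h6 m]
    exact Finset.subset_union_left
  · intro m j hne
    show j ∈ (g (m + 1)).2.2
    rw [h6 m]
    exact Finset.mem_union_right _ (DFinsupp.mem_support_iff.2 hne)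
  · intro i
    by_cases hiU : i ∈ ⋃ m, Set.accumulate Y m
    · obtain ⟨m₀, hm₀⟩ := Set.mem_iUnion.1 hiU
      refine ⟨m₀, fun m hm => ?_⟩
      refine h2 m i (fun hc => ?_)
      refine hc.2 ?_
      rw [hcnt m]
      exact Set.monotone_accumulate hm hm₀
    · exact ⟨0, fun m _ => h2 m i (fun hc => hiU hc.1)⟩

/-- Uniformization: a single pair `(n, E)` works for all elements with negligible
support. -/
theorem claimG (hdesc : PPDescending ψ) : ∃ (n : ℕ) (E : Finset J),
    ∀ x : ∀ i, U i, x ∈ (ψ n).set (∀ i, U i) → Small ψ f {i | x i ≠ 0} →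
      ∀ k, proj (R := R) E (f x) ∈ (ψ k).set (⨁ j, V j) := by
  by_contra hno
  push_neg at hno
  refine MasterA (f := f) hdesc (Small ψ f) small_empty ?_
  intro n E B hB
  obtain ⟨nB, EB, hBd⟩ := hB
  obtain ⟨x₀, hx₀, hx₀sm, k, hk⟩ := hno (max n nB) (E ∪ EB)
  obtain ⟨c1, c2, c3⟩ := cut_elem hdesc hBd hx₀ hk
  refine ⟨res Bᶜ x₀, k, c1, c2, ?_, c3⟩
  refine small_union hdesc ⟨nB, EB, hBd⟩ (small_mono ?_ hx₀sm)
  intro i hi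
  show x₀ i ≠ 0
  intro hc
  refine hi ?_
  show res Bᶜ x₀ i = 0
  unfold res
  split <;> simp [hc]

/-- An atom for the ideal of negligible sets. -/
def AtomS (ps : ℕ → PPFormula R) (f0 : (∀ i, U i) →ₗ[R] ⨁ j, V j) (A : Set I) : Prop :=
  ¬ Small ps f0 A ∧ ∀ X, X ⊆ A → Small ps f0 X ∨ Small ps f0 (A \ X)

theorem atom_exists (hdesc : PPDescending ψ) {B : Set I} (hB : ¬ Small ψ f B) :
    ∃ A, A ⊆ B ∧ AtomS ψ f A := by
  by_contra hno
  push_neg at hno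
  have hstep : ∀ C : Set I, C ⊆ B → ¬ Small ψ f C →
      ∃ X, X ⊆ C ∧ ¬ Small ψ f X ∧ ¬ Small ψ f (C \ X) := by
    intro C hCB hC
    have h1 := hno C hCB
    unfold AtomS at h1
    push_neg at h1
    obtain ⟨X, hX1, hX2, hX3⟩ := h1 hC
    exact ⟨X, hX1, hX2, hX3⟩
  let Q : {C : Set I // C ⊆ B ∧ ¬ Small ψ f C} → {C : Set I // C ⊆ B ∧ ¬ Small ψ f C} → Prop :=
    fun a b => b.1 ⊆ a.1 ∧ ¬ Small ψ f (a.1 \ b.1)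
  have hQ : ∀ a, ∃ b, Q a b := by
    intro a
    obtain ⟨X, hX1, hX2, hX3⟩ := hstep a.1 a.2.1 a.2.2
    exact ⟨⟨X, hX1.trans a.2.1, hX2⟩, hX1, hX3⟩
  obtain ⟨g, hg0, hgQ⟩ := depRec ⟨B, subset_rfl, hB⟩ Q hQ
  have hmono : ∀ {s t : ℕ}, s ≤ t → (g t).1 ⊆ (g s).1 := by
    intro s t h
    induction h with
    | refl => exact subset_rfl
    | step _ ih => exact ((hgQ _).1).trans ih
  refine noInfDisjoint hdesc (fun m => (g m).1 \ (g (m + 1)).1) ?_ (fun m => (hgQ m).2)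
  intro l m hlm i hi hm
  exact hi.2 (hmono (Nat.succ_le_of_lt hlm) hm.1)

theorem atom_ultrafilter (hdesc : PPDescending ψ) {A : Set I} (hA : AtomS ψ f A) :
    ∃ D : Ultrafilter I, ∀ X : Set I, X ∈ D ↔ Small ψ f (A \ X) := by
  have huniv : Small ψ f (A \ Set.univ) := by
    rw [Set.diff_univ]; exact small_empty
  have hsup : ∀ {X Y : Set I}, Small ψ f (A \ X) → X ⊆ Y → Small ψ f (A \ Y) :=
    fun hX hXY => small_mono (Set.diff_subset_diff_right hXY) hX
  have hint : ∀ {X Y : Set I}, Small ψ f (A \ X) → Small ψ f (A \ Y) →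
      Small ψ f (A \ (X ∩ Y)) := by
    intro X Y hX hY
    rw [Set.diff_inter]
    exact small_union hdesc hX hY
  refine ⟨Ultrafilter.ofComplNotMemIff
    ⟨{X | Small ψ f (A \ X)}, huniv, fun hX hXY => hsup hX hXY, fun hX hY => hint hX hY⟩
    ?_, fun X => Iff.rfl⟩
  intro s
  constructor
  · intro hs
    have h1 : ¬ Small ψ f (A ∩ s) := by
      intro hc
      exact hs (by show Small ψ f (A \ sᶜ); rwa [Set.diff_compl])
    rcases hA.2 (A ∩ s) Set.inter_subset_left with h | h
    · exact absurd h h1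
    · rwa [Set.diff_self_inter] at h
  · intro hs hsc
    have h2 : Small ψ f (A ∩ s) := by
      rw [← Set.diff_compl]
      exact hsc
    refine hA.1 ?_
    have h3 : Small ψ f ((A \ s) ∪ (A ∩ s)) := small_union hdesc hs h2
    rwa [Set.diff_union_inter] at h3

theorem atoms_decomp (hdesc : PPDescending ψ) : ∃ (k : ℕ) (A : Fin k → Set I),
    (∀ l, AtomS ψ f (A l)) ∧ Small ψ f (Set.univ \ ⋃ l, A l) := by
  have hzorn : ∀ c ⊆ {F : Set (Set I) | (∀ A ∈ F, AtomS ψ f A) ∧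
      F.Pairwise (fun X Y => X ∩ Y = ∅)}, IsChain (· ⊆ ·) c →
      ∃ ub ∈ {F : Set (Set I) | (∀ A ∈ F, AtomS ψ f A) ∧
        F.Pairwise (fun X Y => X ∩ Y = ∅)}, ∀ s ∈ c, s ⊆ ub := by
    intro c hcS hchain
    refine ⟨⋃₀ c, ⟨?_, ?_⟩, fun s hs => Set.subset_sUnion_of_mem hs⟩
    · rintro A ⟨F, hFc, hAF⟩
      exact (hcS hFc).1 A hAF
    · intro X hX Y hY hne
      obtain ⟨F1, hF1, hXF⟩ := hX
      obtain ⟨F2, hF2, hYF⟩ := hY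
      rcases eq_or_ne F1 F2 with rfl | hF
      · exact (hcS hF1).2 hXF hYF hne
      · rcases hchain hF1 hF2 hF with h | h
        · exact (hcS hF2).2 (h hXF) hYF hne
        · exact (hcS hF1).2 hXF (h hYF) hne
  obtain ⟨M, hM⟩ := zorn_subset
      {F : Set (Set I) | (∀ A ∈ F, AtomS ψ f A) ∧ F.Pairwise (fun X Y => X ∩ Y = ∅)} hzorn
  have hMfin : M.Finite := by
    by_contra hinf
    have hinf' : M.Infinite := hinf
    let e := hinf'.natEmbedding
    refine noInfDisjoint hdesc (fun m => (e m : Set I)) ?_ (fun m => (hM.prop.1 _ (e m).2).1)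
    intro l m hlm i hil him
    have hne : (e l : Set I) ≠ (e m : Set I) := by
      intro he
      exact absurd (e.injective (Subtype.ext he)) (by omega)
    have hd := hM.prop.2 (e l).2 (e m).2 hne
    exact absurd (Set.mem_inter hil him) (by rw [hd]; exact Set.notMem_empty i)
  have hrem : Small ψ f (Set.univ \ ⋃₀ M) := by
    by_contra hrm
    obtain ⟨A₀, hA₀sub, hA₀⟩ := atom_exists hdesc hrm
    have hA₀disj : ∀ X ∈ M, A₀ ∩ X = ∅ := by
      intro X hXM
      ext i
      simp only [Set.mem_inter_iff, Set.mem_empty_iff_false, iff_false, not_and]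
      intro hiA hiX
      exact (hA₀sub hiA).2 ⟨X, hXM, hiX⟩
    have hM' : insert A₀ M ∈
        {F : Set (Set I) | (∀ A ∈ F, AtomS ψ f A) ∧ F.Pairwise (fun X Y => X ∩ Y = ∅)} := by
      constructor
      · rintro A (rfl | hAM)
        · exact hA₀
        · exact hM.prop.1 A hAM
      · refine hM.prop.2.insert ?_
        intro X hXM hne
        exact ⟨hA₀disj X hXM, by rw [Set.inter_comm]; exact hA₀disj X hXM⟩
    have hsub : insert A₀ M ⊆ M := hM.2 hM' (Set.subset_insert A₀ M)
    have hA₀M : A₀ ∈ M := hsub (Set.mem_insert _ _)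
    have hA₀empty : A₀ = ∅ := by
      ext i
      simp only [Set.mem_empty_iff_false, iff_false]
      intro hi
      exact (hA₀sub hi).2 ⟨A₀, hA₀M, hi⟩
    exact hA₀.1 (hA₀empty ▸ small_empty)
  obtain ⟨k, e, he⟩ := hMfin.fin_embedding
  refine ⟨k, fun l => e l, fun l => hM.prop.1 _ (he ▸ Set.mem_range_self l),
    small_mono ?_ hrem⟩
  intro i hi
  refine ⟨trivial, fun hc => hi.2 ?_⟩
  obtain ⟨X, hXM, hiX⟩ := hc
  rw [← he] at hXM
  obtain ⟨l, rfl⟩ := hXM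
  exact Set.mem_iUnion.2 ⟨l, hiX⟩

end Main

end PP5

/-- Given a descending sequence of pp-formulas and a homomorphism
`f : ∏_{i∈I} U_i → ⊕_{j∈J} V_j`, there exist `n₀ < ω`, finitely many `ω₁`-complete
ultrafilters `D₁, …, D_k` on `I` and a finite `J' ⊆ J` such that
`f(ψ_{n₀}(∏ U_i) ∩ ⋂ₙ Ker(π_{Dₙ})) ⊆ ⊕_{j∈J'} V_j + ⋂ₙ ψ_n(⊕ V_j)`. -/
theorem exists_ultrafilters_image_subset
    (R : Type u) [Ring R] (ψ : ℕ → PPFormula R) (hdesc : PPDescending ψ)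
    (I J : Type u) (U : I → Type u) [∀ i, AddCommGroup (U i)] [∀ i, Module R (U i)]
    (V : J → Type u) [∀ j, AddCommGroup (V j)] [∀ j, Module R (V j)]
    (f : (∀ i, U i) →ₗ[R] ⨁ j, V j) :
    ∃ (n₀ k : ℕ) (D : Fin k → Ultrafilter I),
      (∀ t : Fin k, FilterComplete (D t : Filter I) (Cardinal.aleph 1)) ∧
      ∃ J' : Finset J,
        ∀ x ∈ (ψ n₀).set (∀ i, U i) ∩ ⋂ t : Fin k, {x : ∀ i, U i | {i | x i = 0} ∈ D t},
          ∃ a b : ⨁ j, V j, (∀ j ∉ J', a j = 0) ∧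
            (∀ n : ℕ, b ∈ (ψ n).set (⨁ j, V j)) ∧ f x = a + b := by
  classical
  obtain ⟨n₀, E₀, hG⟩ := PP5.claimG (f := f) hdesc
  obtain ⟨k, A, hAtom, hRem⟩ := PP5.atoms_decomp (f := f) hdesc
  choose D hD using fun l => PP5.atom_ultrafilter (f := f) hdesc (hAtom l)
  refine ⟨n₀, k, D, ?_, E₀, ?_⟩
  · intro t S hS hSF
    have hcnt : S.Countable := (Cardinal.countable_iff_lt_aleph_one S).2 hS
    rcases S.eq_empty_or_nonempty with rfl | hne
    · simp only [Set.sInter_empty]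
      exact Filter.univ_mem
    · obtain ⟨e, he⟩ := hcnt.exists_eq_range hne
      rw [he, Set.sInter_range]
      have hmem : PP5.Small ψ f (A t \ ⋂ m, e m) := by
        rw [Set.diff_iInter]
        refine PP5.small_iUnion (f := f) hdesc _ (fun m => ?_)
        have h1 : e m ∈ D t := by
          have := hSF (e m) (he ▸ Set.mem_range_self m)
          exact this
        exact (hD t (e m)).1 h1
      exact (hD t (⋂ m, e m)).2 hmem
  · intro x hx
    obtain ⟨hx1, hx2⟩ := hx
    have hxD : ∀ t, {i | x i = 0} ∈ D t := by
      intro t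
      have := Set.mem_iInter.1 hx2 t
      exact this
    have hsupp : PP5.Small ψ f {i | x i ≠ 0} := by
      have hsub : {i | x i ≠ 0} ⊆ (Set.univ \ ⋃ l, A l) ∪
          ⋃ (m : ℕ), (if h : m < k then A ⟨m, h⟩ \ {i | x i = 0} else ∅) := by
        intro i hi
        by_cases hiA : ∃ l, i ∈ A l
        · obtain ⟨l, hl⟩ := hiA
          refine Or.inr (Set.mem_iUnion.2 ⟨l.1, ?_⟩)
          rw [dif_pos l.2]
          exact ⟨by rw [Fin.eta]; exact hl, hi⟩
        · exact Or.inl ⟨trivial, fun hc => hiA (Set.mem_iUnion.1 hc)⟩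
      refine PP5.small_mono hsub (PP5.small_union hdesc hRem
        (PP5.small_iUnion (f := f) hdesc _ (fun m => ?_)))
      by_cases h : m < k
      · rw [dif_pos h]
        exact (hD ⟨m, h⟩ _).1 (hxD ⟨m, h⟩)
      · rw [dif_neg h]
        exact PP5.small_empty
    have hb := hG x hx1 hsupp
    refine ⟨f x - PP5.proj (R := R) E₀ (f x), PP5.proj (R := R) E₀ (f x),
      fun j hj => PP5.sub_proj_eq_zero E₀ (f x) hj, hb, by rw [sub_add_cancel]⟩
end

section
/- For any ring R and any Σ-algebraically compact left R-module M, Add(M) ⊆ Prod(M): every direct summand of a direct sum of copies of M is isomorphic to a direct summand of a direct product of copies of M. (No set-theoretic hypothesis on |M| is needed for this direction.) -/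
universe u

open Cardinal

/-- `M` is Σ-algebraically compact: every descending chain of pp-definable
subgroups of `M` eventually stabilizes. -/
def IsSigmaAlgCompact (R : Type u) [Ring R] (M : Type u) [AddCommGroup M] [Module R M] : Prop :=
  ∀ ψ : ℕ → PPFormula R, (∀ n : ℕ, (ψ (n + 1)).set M ⊆ (ψ n).set M) →
    ∃ N : ℕ, ∀ n : ℕ, N ≤ n → (ψ n).set M = (ψ N).set M

/-- `N` belongs to `Add M`: it is isomorphic to a direct summand of a direct sum
`M^(I)` of copies of `M`. -/
def MemAdd (R : Type u) [Ring R] (M : Type u) [AddCommGroup M] [Module R M]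
    (N : Type u) [AddCommGroup N] [Module R N] : Prop :=
  ∃ (I : Type u) (ι : N →ₗ[R] (I →₀ M)) (π : (I →₀ M) →ₗ[R] N), π ∘ₗ ι = LinearMap.id

/-- `N` belongs to `Prod M`: it is isomorphic to a direct summand of a direct power
`M^I` of copies of `M`. -/
def MemProd (R : Type u) [Ring R] (M : Type u) [AddCommGroup M] [Module R M]
    (N : Type u) [AddCommGroup N] [Module R N] : Prop :=
  ∃ (I : Type u) (ι : N →ₗ[R] (I → M)) (π : (I → M) →ₗ[R] N), π ∘ₗ ι = LinearMap.id

/-- `Add(M) ⊆ Prod(M)`. -/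
def AddLeProd (R : Type u) [Ring R] (M : Type u) [AddCommGroup M] [Module R M] : Prop :=
  ∀ (N : Type u) [AddCommGroup N] [Module R N], MemAdd R M N → MemProd R M N

section GPP
variable (R : Type u) [Ring R] (X : Type u) [AddCommGroup X] [Module R X]

structure GPP where
  ν : Type u
  κ : Type u
  finν : Fintype ν
  finκ : Fintype κ
  a : ν → R
  B : κ → ν → R
  c : ν → X

attribute [instance] GPP.finν GPP.finκ

variable {R X}

def GPP.Sat (φ : GPP R X) (x : X) : Prop :=
  ∃ y : φ.κ → X, ∀ j, φ.a j • x + ∑ i, φ.B i j • y i = φ.c j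

def GPP.HSet (φ : GPP R X) : Set X :=
  {x | ∃ y : φ.κ → X, ∀ j, φ.a j • x + ∑ i, φ.B i j • y i = 0}

lemma GPP.zero_mem_HSet (φ : GPP R X) : (0 : X) ∈ φ.HSet :=
  ⟨0, fun j => by simp⟩

lemma GPP.sat_sub_mem {φ : GPP R X} {x x' : X} (h : φ.Sat x) (h' : φ.Sat x') :
    x - x' ∈ φ.HSet := by
  obtain ⟨y, hy⟩ := h
  obtain ⟨y', hy'⟩ := h'
  refine ⟨y - y', fun j => ?_⟩
  have := congrArg₂ (· - ·) (hy j) (hy' j)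
  simpa [smul_sub, Finset.sum_sub_distrib, add_sub_add_comm] using this

lemma GPP.sat_add_mem {φ : GPP R X} {x g : X} (h : φ.Sat x) (hg : g ∈ φ.HSet) :
    φ.Sat (x + g) := by
  obtain ⟨y, hy⟩ := h
  obtain ⟨y', hy'⟩ := hg
  refine ⟨y + y', fun j => ?_⟩
  have := congrArg₂ (· + ·) (hy j) (hy' j)
  simpa [smul_add, Finset.sum_add_distrib, add_add_add_comm] using this

/-- Convert a `GPP` (ignoring constants) to a `PPFormula` with the same homogeneous set. -/
@[reducible] noncomputable def GPP.toPP (φ : GPP R X) : PPFormula R where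
  n := Fintype.card φ.ν
  k := Fintype.card φ.κ
  a := fun j => φ.a ((Fintype.equivFin φ.ν).symm j)
  B := fun i j => φ.B ((Fintype.equivFin φ.κ).symm i) ((Fintype.equivFin φ.ν).symm j)

lemma GPP.toPP_set (φ : GPP R X) : (φ.toPP).set X = φ.HSet := by
  classical
  ext x
  have key : ∀ (y : φ.κ → X) (j : φ.ν),
      ∑ i : Fin (Fintype.card φ.κ), φ.toPP.B i ((Fintype.equivFin φ.ν) j) • y ((Fintype.equivFin φ.κ).symm i)
        = ∑ i : φ.κ, φ.B i j • y i := by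
    intro y j
    refine Fintype.sum_equiv (Fintype.equivFin φ.κ).symm _ _ ?_
    intro i
    simp [GPP.toPP]
  constructor
  · rintro ⟨y, hy⟩
    refine ⟨fun i => y (Fintype.equivFin φ.κ i), fun j => ?_⟩
    have h := hy (Fintype.equivFin φ.ν j)
    have h2 := key (fun i => y (Fintype.equivFin φ.κ i)) j
    simp only [Equiv.apply_symm_apply] at h2
    rw [← h2]
    simpa [GPP.toPP] using h
  · rintro ⟨y, hy⟩
    refine ⟨fun i => y ((Fintype.equivFin φ.κ).symm i), fun j => ?_⟩
    have h := hy ((Fintype.equivFin φ.ν).symm ((Fintype.equivFin φ.ν) ((Fintype.equivFin φ.ν).symm j)))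
    simp only [Equiv.apply_symm_apply] at h
    have h2 := key y ((Fintype.equivFin φ.ν).symm j)
    rw [show j = (Fintype.equivFin φ.ν) ((Fintype.equivFin φ.ν).symm j) by simp]
    rw [show φ.toPP.a ((Fintype.equivFin φ.ν) ((Fintype.equivFin φ.ν).symm j)) = φ.a ((Fintype.equivFin φ.ν).symm j) by simp [GPP.toPP]]
    exact (congrArg (fun z => φ.a ((Fintype.equivFin φ.ν).symm j) • x + z) h2).trans h

end GPP

section Conj
variable {R : Type u} [Ring R] {X : Type u} [AddCommGroup X] [Module R X]

/-- Trivial GPP: no equations. -/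
def GPP.triv : GPP R X where
  ν := PEmpty
  κ := PEmpty
  finν := inferInstance
  finκ := inferInstance
  a := fun j => j.elim
  B := fun i => i.elim
  c := fun j => j.elim

lemma GPP.triv_HSet : (GPP.triv : GPP R X).HSet = Set.univ := by
  ext x
  simp only [GPP.HSet, Set.mem_setOf_eq, Set.mem_univ, iff_true]
  exact ⟨fun i => i.elim, fun j => j.elim⟩

/-- Conjunction of two GPPs (homogeneous use only). -/
@[reducible] def GPP.conj (φ₁ φ₂ : GPP R X) : GPP R X where
  ν := φ₁.ν ⊕ φ₂.ν
  κ := φ₁.κ ⊕ φ₂.κ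
  finν := inferInstance
  finκ := inferInstance
  a := Sum.elim φ₁.a φ₂.a
  B := fun i j =>
    match i, j with
    | .inl i₁, .inl j₁ => φ₁.B i₁ j₁
    | .inl _, .inr _ => 0
    | .inr _, .inl _ => 0
    | .inr i₂, .inr j₂ => φ₂.B i₂ j₂
  c := Sum.elim φ₁.c φ₂.c

lemma GPP.conj_HSet (φ₁ φ₂ : GPP R X) : (φ₁.conj φ₂).HSet = φ₁.HSet ∩ φ₂.HSet := by
  ext x
  constructor
  · rintro ⟨y, hy⟩
    constructor
    · refine ⟨fun i => y (.inl i), fun j => ?_⟩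
      have := hy (.inl j)
      simpa [GPP.conj, Fintype.sum_sum_type] using this
    · refine ⟨fun i => y (.inr i), fun j => ?_⟩
      have := hy (.inr j)
      simpa [GPP.conj, Fintype.sum_sum_type] using this
  · rintro ⟨⟨y₁, hy₁⟩, ⟨y₂, hy₂⟩⟩
    refine ⟨Sum.elim y₁ y₂, fun j => ?_⟩
    rcases j with j₁ | j₂
    · simpa [GPP.conj, Fintype.sum_sum_type] using hy₁ j₁
    · simpa [GPP.conj, Fintype.sum_sum_type] using hy₂ j₂

/-- Any finite intersection of homogeneous GPP sets is representable by a GPP. -/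
lemma exists_gpp_of_finite_inter {T : Type u} (φ : T → GPP R X) (F : Finset T) :
    ∃ g : GPP R X, g.HSet = ⋂ t ∈ F, (φ t).HSet := by
  classical
  induction F using Finset.induction_on with
  | empty => exact ⟨GPP.triv, by rw [GPP.triv_HSet]; simp⟩
  | @insert a s hnot ih =>
      obtain ⟨g, hg⟩ := ih
      refine ⟨(φ a).conj g, ?_⟩
      rw [GPP.conj_HSet, hg]; ext x; simp [Set.mem_iInter, Finset.mem_insert]

lemma exists_pp_of_finite_inter {T : Type u} (φ : T → GPP R X) (F : Finset T) :
    ∃ ψ : PPFormula R, ψ.set X = ⋂ t ∈ F, (φ t).HSet := by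
  obtain ⟨g, hg⟩ := exists_gpp_of_finite_inter φ F
  exact ⟨g.toPP, by rw [GPP.toPP_set, hg]⟩

end Conj

section DCC
variable {R : Type u} [Ring R] {X : Type u} [AddCommGroup X] [Module R X]

/-- Descending chain condition on pp-definable subgroups of `X`. -/
def DCC (R : Type u) [Ring R] (X : Type u) [AddCommGroup X] [Module R X] : Prop :=
  ∀ ψ : ℕ → PPFormula R, (∀ n : ℕ, (ψ (n + 1)).set X ⊆ (ψ n).set X) →
    ∃ N : ℕ, ∀ n : ℕ, N ≤ n → (ψ n).set X = (ψ N).set X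

lemma exists_min_finset (hd : DCC R X) {T : Type u} (φ : T → GPP R X) :
    ∃ F₀ : Finset T, ∀ t : T, (⋂ s ∈ F₀, (φ s).HSet) ⊆ (φ t).HSet := by
  classical
  by_contra hcon
  have hcon' : ∀ F : Finset T, ∃ t, ¬ ((⋂ s ∈ F, (φ s).HSet) ⊆ (φ t).HSet) := by
    intro F
    by_contra hF
    push_neg at hF
    exact hcon ⟨F, hF⟩
  choose pick hpick using hcon'
  let seq : ℕ → Finset T := fun n => Nat.rec ∅ (fun _ F => insert (pick F) F) n
  have hstep : ∀ n, seq (n + 1) = insert (pick (seq n)) (seq n) := fun n => rfl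
  have hsub : ∀ n, (⋂ s ∈ seq (n + 1), (φ s).HSet) ⊆ ⋂ s ∈ seq n, (φ s).HSet := by
    intro n
    rw [hstep n]
    exact Set.biInter_subset_biInter_left (fun s hs => Finset.mem_insert_of_mem hs)
  have hne : ∀ n, (⋂ s ∈ seq (n + 1), (φ s).HSet) ≠ ⋂ s ∈ seq n, (φ s).HSet := by
    intro n heq
    apply hpick (seq n)
    intro x hx
    have hx' : x ∈ ⋂ s ∈ seq (n + 1), (φ s).HSet := heq ▸ hx
    have hm : pick (seq n) ∈ seq (n + 1) := by rw [hstep]; exact Finset.mem_insert_self _ _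
    exact Set.mem_iInter₂.mp hx' _ hm
  choose ψ hψ using fun n => exists_pp_of_finite_inter φ (seq n)
  obtain ⟨N, hN⟩ := hd ψ (fun n => by rw [hψ, hψ]; exact hsub n)
  apply hne N
  have := hN (N + 1) (Nat.le_succ N)
  rw [hψ, hψ] at this
  exact this

end DCC

section Realize
variable {R : Type u} [Ring R] {X : Type u} [AddCommGroup X] [Module R X]

lemma realize_type (hd : DCC R X) {T : Type u} (φ : T → GPP R X)
    (hfin : ∀ F : Finset T, ∃ x : X, ∀ t ∈ F, (φ t).Sat x) :
    ∃ x : X, ∀ t, (φ t).Sat x := by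
  classical
  obtain ⟨F₀, hF₀⟩ := exists_min_finset hd φ
  obtain ⟨x₀, hx₀⟩ := hfin F₀
  refine ⟨x₀, fun t => ?_⟩
  obtain ⟨d, hd'⟩ := hfin (insert t F₀)
  have h1 : x₀ - d ∈ ⋂ s ∈ F₀, (φ s).HSet :=
    Set.mem_biInter fun s hs =>
      GPP.sat_sub_mem (hx₀ s hs) (hd' s (Finset.mem_insert_of_mem hs))
  have h2 : x₀ - d ∈ (φ t).HSet := hF₀ t h1
  have h3 : (φ t).Sat d := hd' t (Finset.mem_insert_self t F₀)
  have h4 := GPP.sat_add_mem h3 h2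
  simpa using h4

end Realize

section Finsupp
variable {R : Type u} [Ring R] {M : Type u} [AddCommGroup M] [Module R M]

lemma pp_zero_mem (ψ : PPFormula R) (X : Type u) [AddCommGroup X] [Module R X] :
    (0 : X) ∈ ψ.set X := ⟨0, fun j => by simp⟩

lemma pp_set_finsupp (ψ : PPFormula R) {I : Type u} (x : I →₀ M) :
    x ∈ ψ.set (I →₀ M) ↔ ∀ i, x i ∈ ψ.set M := by
  classical
  constructor
  · rintro ⟨y, hy⟩ i
    refine ⟨fun t => y t i, fun j => ?_⟩
    have := congrArg (fun z : I →₀ M => z i) (hy j)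
    simpa [Finsupp.add_apply, Finsupp.smul_apply, Finsupp.finset_sum_apply] using this
  · intro h
    have hw : ∀ t : I, ∃ w : Fin ψ.k → M,
        ∀ j, ψ.a j • x t + ∑ i, ψ.B i j • w i = 0 := fun t => h t
    choose w hww using hw
    set w' : I → Fin ψ.k → M := fun t => if x t = 0 then 0 else w t with hw'
    refine ⟨fun i => Finsupp.onFinset x.support (fun t => w' t i) (fun t ht => ?_), fun j => ?_⟩
    · by_contra hts
      have : x t = 0 := Finsupp.notMem_support_iff.mp hts
      simp [hw', this] at ht
    · ext t
      simp only [Finsupp.add_apply, Finsupp.smul_apply, Finsupp.finset_sum_apply,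
        Finsupp.onFinset_apply, Finsupp.coe_zero, Pi.zero_apply]
      by_cases hxt : x t = 0
      · simp [hw', hxt]
      · simpa [hw', hxt] using hww t j

lemma dcc_finsupp (hM : IsSigmaAlgCompact R M) (I : Type u) : DCC R (I →₀ M) := by
  intro ψ hdesc
  cases isEmpty_or_nonempty I with
  | inl hI =>
      refine ⟨0, fun n _ => ?_⟩
      ext x
      have hx : x = 0 := Subsingleton.elim x 0
      subst hx
      simp [pp_zero_mem]
  | inr hI =>
      obtain ⟨i₀⟩ := hI
      have hdescM : ∀ n, (ψ (n + 1)).set M ⊆ (ψ n).set M := by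
        intro n m hm
        have h1 : (Finsupp.single i₀ m) ∈ (ψ (n + 1)).set (I →₀ M) := by
          rw [pp_set_finsupp]
          intro i
          classical
          rw [Finsupp.single_apply]
          split
          · exact hm
          · exact pp_zero_mem _ _
        have h2 := hdesc n h1
        rw [pp_set_finsupp] at h2
        have := h2 i₀
        simpa using this
      obtain ⟨N, hN⟩ := hM ψ hdescM
      refine ⟨N, fun n hn => ?_⟩
      ext x
      rw [pp_set_finsupp, pp_set_finsupp, hN n hn]

end Finsupp

section Split
variable {R : Type u} [Ring R] {M : Type u} [AddCommGroup M] [Module R M] {I : Type u}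

/-- Finite solvability of the retraction system relative to a partial assignment. -/
def FinSolv (R : Type u) [Ring R] {M : Type u} [AddCommGroup M] [Module R M] {I : Type u}
    (D : Set (I → M)) (g : (I → M) → (I →₀ M)) : Prop :=
  ∀ (F₁ : Finset ((I → M) × (I → M))) (F₂ : Finset (R × (I → M)))
    (F₃ : Finset (I →₀ M)) (F₀ : Finset (I → M)), ↑F₀ ⊆ D →
    ∃ h : (I → M) → (I →₀ M),
      (∀ b ∈ F₀, h b = g b) ∧
      (∀ u ∈ F₁, h (u.1 + u.2) = h u.1 + h u.2) ∧
      (∀ u ∈ F₂, h (u.1 • u.2) = u.1 • h u.2) ∧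
      (∀ s ∈ F₃, h ⇑s = s)

lemma finSolv_base : FinSolv R (∅ : Set (I → M)) 0 := by
  classical
  intro F₁ F₂ F₃ F₀ hF₀
  set J : Finset I := F₃.sup Finsupp.support with hJ
  refine ⟨fun b => Finsupp.onFinset J (fun i => if i ∈ J then b i else 0)
    (fun i hi => by by_contra hiJ; simp [hiJ] at hi), ?_, ?_, ?_, ?_⟩
  · intro b hb
    exact absurd (hF₀ hb) (Set.notMem_empty b)
  · intro u _
    ext i
    by_cases hi : i ∈ J <;> simp [Finsupp.onFinset_apply, hi]
  · intro u _
    ext i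
    by_cases hi : i ∈ J <;> simp [Finsupp.onFinset_apply, hi]
  · intro s hs
    ext i
    by_cases hi : i ∈ J
    · simp [Finsupp.onFinset_apply, hi]
    · have hsub : s.support ⊆ J := Finset.le_sup hs
      have : i ∉ s.support := fun hmem => hi (hsub hmem)
      simp [Finsupp.onFinset_apply, hi, Finsupp.notMem_support_iff.mp this]

variable (R M I) in
/-- Partial solutions, ordered by extension. -/
def PartSol : Type u :=
  {p : Set (I → M) × ((I → M) → (I →₀ M)) // FinSolv R p.1 p.2}

instance : Preorder (PartSol R M I) where
  le p q := p.1.1 ⊆ q.1.1 ∧ ∀ b ∈ p.1.1, q.1.2 b = p.1.2 b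
  le_refl p := ⟨subset_rfl, fun _ _ => rfl⟩
  le_trans p q r hpq hqr :=
    ⟨hpq.1.trans hqr.1, fun b hb => (hqr.2 b (hpq.1 hb)).trans (hpq.2 b hb)⟩

lemma partSol_chain_bddAbove (c : Set (PartSol R M I)) (hc : IsChain (· ≤ ·) c) :
    BddAbove c := by
  classical
  rcases Set.eq_empty_or_nonempty c with rfl | ⟨p₀, hp₀⟩
  · exact ⟨⟨⟨∅, 0⟩, finSolv_base⟩, fun p hp => absurd hp (Set.notMem_empty p)⟩
  -- glued domain and function
  set D : Set (I → M) := ⋃ p ∈ c, p.1.1 with hD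
  have hex : ∀ b ∈ D, ∃ p, p ∈ c ∧ b ∈ p.1.1 := by
    intro b hb
    simpa [hD] using hb
  set g : (I → M) → (I →₀ M) := fun b =>
    if h : ∃ p, p ∈ c ∧ b ∈ p.1.1 then (h.choose).1.2 b else 0 with hg
  -- consistency
  have hcons : ∀ p ∈ c, ∀ b ∈ p.1.1, g b = p.1.2 b := by
    intro p hp b hb
    have h : ∃ q, q ∈ c ∧ b ∈ q.1.1 := ⟨p, hp, hb⟩
    rw [hg]
    simp only [dif_pos h]
    obtain ⟨hqc, hbq⟩ := h.choose_spec
    rcases eq_or_ne h.choose p with heq | hne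
    · rw [heq]
    · rcases hc.total hqc hp with hle | hle
      · exact (hle.2 b hbq).symm
      · exact hle.2 b hb
  have hdir : ∀ F : Finset (I → M), ↑F ⊆ D → ∃ p, p ∈ c ∧ ↑F ⊆ p.1.1 := by
    intro F
    induction F using Finset.induction_on with
    | empty => exact fun _ => ⟨p₀, hp₀, by simp⟩
    | @insert b F hbF ih =>
        intro hins
        rw [Finset.coe_insert, Set.insert_subset_iff] at hins
        obtain ⟨p, hpc, hpF⟩ := ih hins.2
        obtain ⟨q, hqc, hbq⟩ := hex b hins.1
        rcases eq_or_ne p q with rfl | hne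
        · exact ⟨p, hpc, by rw [Finset.coe_insert, Set.insert_subset_iff]; exact ⟨hbq, hpF⟩⟩
        · rcases hc.total hpc hqc with hle | hle
          · exact ⟨q, hqc, by
              rw [Finset.coe_insert, Set.insert_subset_iff]
              exact ⟨hbq, hpF.trans hle.1⟩⟩
          · exact ⟨p, hpc, by
              rw [Finset.coe_insert, Set.insert_subset_iff]
              exact ⟨hle.1 hbq, hpF⟩⟩
  have hfs : FinSolv R D g := by
    intro F₁ F₂ F₃ F₀ hF₀
    obtain ⟨p, hpc, hpF⟩ := hdir F₀ hF₀
    obtain ⟨h, h0, h1, h2, h3⟩ := p.2 F₁ F₂ F₃ F₀ hpF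
    exact ⟨h, fun b hb => (h0 b hb).trans (hcons p hpc b (hpF hb)).symm, h1, h2, h3⟩
  refine ⟨⟨⟨D, g⟩, hfs⟩, fun p hp => ⟨?_, fun b hb => hcons p hp b hb⟩⟩
  intro x hx
  exact Set.mem_biUnion hp hx

end Split

section Encode
variable {R : Type u} [Ring R] {M : Type u} [AddCommGroup M] [Module R M] {I : Type u}
variable [DecidableEq (I → M)]

/-- Kronecker-type coefficient. -/
def dl (R : Type u) [Ring R] {M : Type u} {I : Type u} [DecidableEq (I → M)]
    (z w : I → M) : R :=
  if w = z then 1 else 0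

lemma sum_dl {W : Finset (I → M)} {z : I → M} (hz : z ∈ W)
    (y : {w // w ∈ W} → (I →₀ M)) :
    ∑ i : {w // w ∈ W}, dl R z ↑i • y i = y ⟨z, hz⟩ := by
  classical
  have hcongr : ∀ i : {w // w ∈ W}, dl R z (↑i) • y i = if i = ⟨z, hz⟩ then y i else 0 := by
    intro i
    by_cases h : i = ⟨z, hz⟩
    · subst h; simp [dl]
    · have : (↑i : I → M) ≠ z := fun hc => h (Subtype.ext hc)
      simp [dl, this, h]
  rw [Fintype.sum_congr _ _ hcongr]
  simp

variable (R) in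
/-- A quadruple of finite pieces of the retraction system. -/
abbrev Quad : Type u :=
  Finset ((I → M) × (I → M)) × Finset (R × (I → M)) × Finset (I →₀ M) × Finset (I → M)

variable (x₀ : I → M) (g : (I → M) → (I →₀ M))

/-- The finite set of "mentioned" unknowns of a quadruple. -/
noncomputable def condW (q : Quad R (M := M) (I := I)) : Finset (I → M) :=
  insert x₀ (q.1.image (fun u => u.1 + u.2) ∪ q.1.image Prod.fst ∪ q.1.image Prod.snd ∪
    q.2.1.image (fun u => u.1 • u.2) ∪ q.2.1.image Prod.snd ∪
    q.2.2.1.image (fun s : I →₀ M => ⇑s) ∪ q.2.2.2)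

section memW
variable {q : Quad R (M := M) (I := I)}

lemma mem_condW_x₀ : x₀ ∈ condW x₀ q := Finset.mem_insert_self _ _

lemma mem_condW_add {u} (hu : u ∈ q.1) : u.1 + u.2 ∈ condW x₀ q :=
  Finset.mem_insert_of_mem (by
    simp only [Finset.mem_union]
    exact Or.inl (Or.inl (Or.inl (Or.inl (Or.inl (Or.inl (Finset.mem_image_of_mem _ hu)))))))

lemma mem_condW_fst {u} (hu : u ∈ q.1) : u.1 ∈ condW x₀ q :=
  Finset.mem_insert_of_mem (by
    simp only [Finset.mem_union]
    exact Or.inl (Or.inl (Or.inl (Or.inl (Or.inl (Or.inr (Finset.mem_image_of_mem _ hu)))))))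

lemma mem_condW_snd {u} (hu : u ∈ q.1) : u.2 ∈ condW x₀ q :=
  Finset.mem_insert_of_mem (by
    simp only [Finset.mem_union]
    exact Or.inl (Or.inl (Or.inl (Or.inl (Or.inr (Finset.mem_image_of_mem _ hu))))))

lemma mem_condW_smul {u} (hu : u ∈ q.2.1) : u.1 • u.2 ∈ condW x₀ q :=
  Finset.mem_insert_of_mem (by
    simp only [Finset.mem_union]
    exact Or.inl (Or.inl (Or.inl (Or.inr (Finset.mem_image_of_mem _ hu)))))

lemma mem_condW_snd₂ {u} (hu : u ∈ q.2.1) : u.2 ∈ condW x₀ q :=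
  Finset.mem_insert_of_mem (by
    simp only [Finset.mem_union]
    exact Or.inl (Or.inl (Or.inr (Finset.mem_image_of_mem _ hu))))

lemma mem_condW_coe {s : I →₀ M} (hs : s ∈ q.2.2.1) : ⇑s ∈ condW x₀ q :=
  Finset.mem_insert_of_mem (by
    simp only [Finset.mem_union]
    exact Or.inl (Or.inr (Finset.mem_image_of_mem _ hs)))

lemma mem_condW_anchor {b} (hb : b ∈ q.2.2.2) : b ∈ condW x₀ q :=
  Finset.mem_insert_of_mem (by
    simp only [Finset.mem_union]
    exact Or.inr hb)

end memW

/-- The GPP over `I →₀ M` encoding a finite piece of the extension problem. -/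
@[reducible] noncomputable def condGPP (q : Quad R (M := M) (I := I)) : GPP R (I →₀ M) where
  ν := PUnit.{u+1} ⊕ ({u // u ∈ q.1} ⊕ ({u // u ∈ q.2.1} ⊕ ({s // s ∈ q.2.2.1} ⊕ {b // b ∈ q.2.2.2})))
  κ := {w // w ∈ condW x₀ q}
  finν := inferInstance
  finκ := inferInstance
  a := fun j => match j with
    | .inl _ => -1
    | .inr _ => 0
  B := fun i j => match j with
    | .inl _ => dl R x₀ ↑i
    | .inr (.inl u) => dl R (u.1.1 + u.1.2) ↑i - dl R u.1.1 ↑i - dl R u.1.2 ↑i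
    | .inr (.inr (.inl u)) => dl R (u.1.1 • u.1.2) ↑i - u.1.1 * dl R u.1.2 ↑i
    | .inr (.inr (.inr (.inl s))) => dl R (⇑s.1) ↑i
    | .inr (.inr (.inr (.inr b))) => dl R b.1 ↑i
  c := fun j => match j with
    | .inl _ => 0
    | .inr (.inl _) => 0
    | .inr (.inr (.inl _)) => 0
    | .inr (.inr (.inr (.inl s))) => s.1
    | .inr (.inr (.inr (.inr b))) => g b.1

/-- Solvability of the finite piece `q` with value `c` at `x₀`. -/
def ExtSolv (q : Quad R (M := M) (I := I)) (c : I →₀ M) : Prop :=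
  ∃ h : (I → M) → (I →₀ M), h x₀ = c ∧ (∀ b ∈ q.2.2.2, h b = g b) ∧
    (∀ u ∈ q.1, h (u.1 + u.2) = h u.1 + h u.2) ∧
    (∀ u ∈ q.2.1, h (u.1 • u.2) = u.1 • h u.2) ∧
    (∀ s ∈ q.2.2.1, h ⇑s = s)

lemma condGPP_sat_iff (q : Quad R (M := M) (I := I)) (c : I →₀ M) :
    (condGPP x₀ g q).Sat c ↔ ExtSolv x₀ g q c := by
  classical
  constructor
  · rintro ⟨y, hy⟩
    refine ⟨fun w => if hw : w ∈ condW x₀ q then y ⟨w, hw⟩ else 0, ?_, ?_, ?_, ?_, ?_⟩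
    · have h := hy (.inl PUnit.unit)
      simp only [condGPP] at h
      rw [sum_dl (mem_condW_x₀ x₀)] at h
      beta_reduce
      rw [dif_pos (mem_condW_x₀ x₀)]
      have h' : -c + y ⟨x₀, mem_condW_x₀ x₀⟩ = 0 := by simpa using h
      linear_combination (norm := abel) h'
    · intro b hb
      have h := hy (.inr (.inr (.inr (.inr ⟨b, hb⟩))))
      simp only [condGPP] at h
      rw [sum_dl (mem_condW_anchor x₀ hb)] at h
      beta_reduce
      rw [dif_pos (mem_condW_anchor x₀ hb)]
      simpa using h
    · intro u hu
      have h := hy (.inr (.inl ⟨u, hu⟩))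
      simp only [condGPP, sub_smul, Finset.sum_sub_distrib] at h
      rw [sum_dl (mem_condW_add x₀ hu), sum_dl (mem_condW_fst x₀ hu),
        sum_dl (mem_condW_snd x₀ hu)] at h
      beta_reduce
      rw [dif_pos (mem_condW_add x₀ hu), dif_pos (mem_condW_fst x₀ hu),
        dif_pos (mem_condW_snd x₀ hu)]
      have h' : y ⟨u.1 + u.2, mem_condW_add x₀ hu⟩ - y ⟨u.1, mem_condW_fst x₀ hu⟩
          - y ⟨u.2, mem_condW_snd x₀ hu⟩ = 0 := by simpa using h
      linear_combination (norm := abel) h'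
    · intro u hu
      have h := hy (.inr (.inr (.inl ⟨u, hu⟩)))
      simp only [condGPP, sub_smul, mul_smul, Finset.sum_sub_distrib,
        ← Finset.smul_sum] at h
      rw [sum_dl (mem_condW_smul x₀ hu), sum_dl (mem_condW_snd₂ x₀ hu)] at h
      beta_reduce
      rw [dif_pos (mem_condW_smul x₀ hu), dif_pos (mem_condW_snd₂ x₀ hu)]
      have h' : y ⟨u.1 • u.2, mem_condW_smul x₀ hu⟩ - u.1 • y ⟨u.2, mem_condW_snd₂ x₀ hu⟩ = 0 := by
        simpa using h
      linear_combination (norm := abel) h'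
    · intro s hs
      have h := hy (.inr (.inr (.inr (.inl ⟨s, hs⟩))))
      simp only [condGPP] at h
      rw [sum_dl (mem_condW_coe x₀ hs)] at h
      beta_reduce
      rw [dif_pos (mem_condW_coe x₀ hs)]
      simpa using h
  · rintro ⟨h, hx, h0, h1, h2, h3⟩
    refine ⟨fun i : {w // w ∈ condW x₀ q} => h ↑i, ?_⟩
    rintro (⟨⟩ | (u | (u | (s | b))))
    · simp only [condGPP]
      rw [sum_dl (mem_condW_x₀ x₀)]
      simp [hx]
    · simp only [condGPP, sub_smul, Finset.sum_sub_distrib]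
      rw [sum_dl (mem_condW_add x₀ u.2), sum_dl (mem_condW_fst x₀ u.2),
        sum_dl (mem_condW_snd x₀ u.2)]
      have h' := h1 u.1 u.2
      simp only [zero_smul, zero_add]
      rw [h']
      abel
    · simp only [condGPP, sub_smul, mul_smul, Finset.sum_sub_distrib, ← Finset.smul_sum]
      rw [sum_dl (mem_condW_smul x₀ u.2), sum_dl (mem_condW_snd₂ x₀ u.2)]
      have h' := h2 u.1 u.2
      simp only [zero_smul, zero_add]
      rw [h']
      abel
    · simp only [condGPP]
      rw [sum_dl (mem_condW_coe x₀ s.2)]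
      simp [h3 s.1 s.2]
    · simp only [condGPP]
      rw [sum_dl (mem_condW_anchor x₀ b.2)]
      simp [h0 b.1 b.2]

lemma ext_step (hdS : DCC R (I →₀ M)) {D : Set (I → M)} {g : (I → M) → (I →₀ M)}
    (hfs : FinSolv R D g) {x₀ : I → M} (hx₀ : x₀ ∉ D) :
    ∃ c : I →₀ M, FinSolv R (insert x₀ D) (Function.update g x₀ c) := by
  classical
  let T : Type u := {q : Quad R (M := M) (I := I) // ↑q.2.2.2 ⊆ D}
  let φ : T → GPP R (I →₀ M) := fun t => condGPP x₀ g t.1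
  have hfin : ∀ F : Finset T, ∃ c : I →₀ M, ∀ t ∈ F, (φ t).Sat c := by
    intro F
    have hQ₀ : ↑(F.sup (fun t : T => t.1.2.2.2)) ⊆ D := by
      intro b hb
      rw [Finset.mem_coe, Finset.mem_sup] at hb
      obtain ⟨t, _, hbt⟩ := hb
      exact t.2 hbt
    obtain ⟨h, h0, h1, h2, h3⟩ := hfs (F.sup (fun t : T => t.1.1))
      (F.sup (fun t : T => t.1.2.1)) (F.sup (fun t : T => t.1.2.2.1))
      (F.sup (fun t : T => t.1.2.2.2)) hQ₀
    refine ⟨h x₀, fun t ht => (condGPP_sat_iff x₀ g t.1 (h x₀)).mpr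
      ⟨h, rfl, ?_, ?_, ?_, ?_⟩⟩
    · intro b hb
      have hle : t.1.2.2.2 ⊆ F.sup (fun t : T => t.1.2.2.2) :=
        Finset.le_sup (f := fun t : T => t.1.2.2.2) ht
      exact h0 b (hle hb)
    · intro v hv
      have hle : t.1.1 ⊆ F.sup (fun t : T => t.1.1) :=
        Finset.le_sup (f := fun t : T => t.1.1) ht
      exact h1 v (hle hv)
    · intro v hv
      have hle : t.1.2.1 ⊆ F.sup (fun t : T => t.1.2.1) :=
        Finset.le_sup (f := fun t : T => t.1.2.1) ht
      exact h2 v (hle hv)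
    · intro s hs
      have hle : t.1.2.2.1 ⊆ F.sup (fun t : T => t.1.2.2.1) :=
        Finset.le_sup (f := fun t : T => t.1.2.2.1) ht
      exact h3 s (hle hs)
  obtain ⟨c, hc⟩ := realize_type hdS φ hfin
  refine ⟨c, ?_⟩
  intro F₁ F₂ F₃ F₀' hF₀'
  have hsub : ↑(F₀'.erase x₀) ⊆ D := by
    intro b hb
    rw [Finset.mem_coe, Finset.mem_erase] at hb
    rcases hF₀' (Finset.mem_coe.mpr hb.2) with h | h
    · exact absurd h hb.1
    · exact h
  have hsat := hc ⟨(F₁, F₂, F₃, F₀'.erase x₀), hsub⟩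
  rw [condGPP_sat_iff] at hsat
  obtain ⟨h, hx, h0, h1, h2, h3⟩ := hsat
  refine ⟨h, ?_, h1, h2, h3⟩
  intro b hb
  by_cases hbx : b = x₀
  · subst hbx
    rw [Function.update_self]
    exact hx
  · rw [Function.update_of_ne hbx]
    exact h0 b (Finset.mem_erase.mpr ⟨hbx, hb⟩)

end Encode

section Assemble
variable {R : Type u} [Ring R] {M : Type u} [AddCommGroup M] [Module R M]

lemma exists_retraction (hM : IsSigmaAlgCompact R M) (I : Type u) :
    ∃ f : (I → M) →ₗ[R] (I →₀ M), ∀ s : I →₀ M, f ⇑s = s := by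
  classical
  have hdS : DCC R (I →₀ M) := dcc_finsupp hM I
  obtain ⟨m, hm⟩ := zorn_le (α := PartSol R M I) partSol_chain_bddAbove
  have hDuniv : m.1.1 = Set.univ := by
    by_contra hne
    have hex : ∃ x₀, x₀ ∉ m.1.1 := by
      by_contra hall
      push_neg at hall
      exact hne (Set.eq_univ_of_forall hall)
    obtain ⟨x₀, hx₀⟩ := hex
    obtain ⟨c, hc⟩ := ext_step hdS m.2 hx₀
    have hle : m ≤ (⟨⟨insert x₀ m.1.1, Function.update m.1.2 x₀ c⟩, hc⟩ : PartSol R M I) :=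
      ⟨Set.subset_insert _ _, fun b hb => by
        have hbx : b ≠ x₀ := fun h => hx₀ (h ▸ hb)
        exact Function.update_of_ne hbx _ _⟩
    have hge := (hm hle).1
    exact hx₀ (hge (Set.mem_insert x₀ _))
  have hfs := m.2
  have hsub : ∀ F : Finset (I → M), ↑F ⊆ m.1.1 := fun F => by
    rw [hDuniv]; exact Set.subset_univ _
  have hadd : ∀ b b', m.1.2 (b + b') = m.1.2 b + m.1.2 b' := by
    intro b b'
    obtain ⟨h, h0, h1, _, _⟩ := hfs {(b, b')} ∅ ∅ {b, b', b + b'} (hsub _)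
    have e1 := h1 (b, b') (Finset.mem_singleton_self _)
    have eb : h b = m.1.2 b := h0 b (by simp)
    have eb' : h b' = m.1.2 b' := h0 b' (by simp)
    have ebb : h (b + b') = m.1.2 (b + b') := h0 (b + b') (by simp)
    rw [eb, eb', ebb] at e1
    exact e1
  have hsmul : ∀ (r : R) (b : I → M), m.1.2 (r • b) = r • m.1.2 b := by
    intro r b
    obtain ⟨h, h0, _, h2, _⟩ := hfs ∅ {(r, b)} ∅ {b, r • b} (hsub _)
    have e1 := h2 (r, b) (Finset.mem_singleton_self _)
    have eb : h b = m.1.2 b := h0 b (by simp)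
    have erb : h (r • b) = m.1.2 (r • b) := h0 (r • b) (by simp)
    rw [eb, erb] at e1
    exact e1
  have hanchor : ∀ s : I →₀ M, m.1.2 ⇑s = s := by
    intro s
    obtain ⟨h, h0, _, _, h3⟩ := hfs ∅ ∅ {s} {⇑s} (hsub _)
    have e1 := h3 s (Finset.mem_singleton_self _)
    have es : h ⇑s = m.1.2 ⇑s := h0 ⇑s (by simp)
    rw [es] at e1
    exact e1
  exact ⟨{ toFun := m.1.2, map_add' := hadd, map_smul' := hsmul }, hanchor⟩

theorem addLeProd_of_sigmaAlgCompact'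
    (R : Type u) [Ring R] (M : Type u) [AddCommGroup M] [Module R M]
    (hM : IsSigmaAlgCompact R M) :
    AddLeProd R M := by
  intro N _ _ hmem
  obtain ⟨I, ι, π, hπι⟩ := hmem
  obtain ⟨f, hf⟩ := exists_retraction hM I
  let lcoe : (I →₀ M) →ₗ[R] (I → M) :=
    { toFun := fun s => ⇑s
      map_add' := fun a b => by ext; simp
      map_smul' := fun r a => by ext; simp }
  refine ⟨I, lcoe ∘ₗ ι, π ∘ₗ f, ?_⟩
  ext n
  have h1 : f (lcoe (ι n)) = ι n := hf (ι n)
  simp only [LinearMap.comp_apply, LinearMap.id_coe, id_eq, h1]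
  simpa using LinearMap.congr_fun hπι n

end Assemble

/-- For any ring `R` and any Σ-algebraically compact left `R`-module
`M`, `Add(M) ⊆ Prod(M)`. -/
theorem addLeProd_of_sigmaAlgCompact
    (R : Type u) [Ring R] (M : Type u) [AddCommGroup M] [Module R M]
    (hM : IsSigmaAlgCompact R M) :
    AddLeProd R M :=
  addLeProd_of_sigmaAlgCompact' R M hM
end

section
/- Let κ be an infinite regular cardinal, λ a cardinal, b : λ → [λ]^{<κ} a bijection, and for α < λ set L_α = { γ < λ : α ∈ b(γ) }. Let U be any ultrafilter on λ containing L_α for every α < λ, and let μ be a cardinal. Then the map h sending a function f : λ → μ to the U-equivalence class of the family (f ↾ b(α))_{α<λ} in the reduced product ∏_{α<λ} (b(α) → μ) / U is injective; consequently |∏_{α<λ} μ^{b(α)} / U| ≥ μ^λ. -/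
universe u

open Cardinal

/-- The setoid on `∀ α, T α` given by `U`-a.e. equality; its quotient is the reduced
product `∏_α T α / U`. -/
def redSetoid {Λ : Type u} (U : Ultrafilter Λ) (T : Λ → Type u) : Setoid (∀ α, T α) where
  r x y := {α | x α = y α} ∈ (U : Filter Λ)
  iseqv := by
    refine ⟨fun x => ?_, fun {x y} h => ?_, fun {x y z} hxy hyz => ?_⟩
    · simp
    · exact Filter.mem_of_superset h fun α hα => (hα : x α = y α).symm
    · exact Filter.mem_of_superset (Filter.inter_mem hxy hyz)
        fun α hα => (hα.1 : x α = y α).trans hα.2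

/-- The reduced product `∏_α T α / U`. -/
def RedProd {Λ : Type u} (U : Ultrafilter Λ) (T : Λ → Type u) : Type u :=
  Quotient (redSetoid U T)

/-- Let `b : Λ → [Λ]^{<κ}` be a bijection, `L_α = {γ : α ∈ b γ}`, and
`U` an ultrafilter on `Λ` containing every `L_α`. Then the map sending `f : Λ → S` to the
class of `(f ↾ b α)_α` in the reduced product `∏_α (b α → S) / U` is injective;
consequently `|∏_α S^{b α} / U| ≥ |S|^|Λ|`. -/
theorem injective_restriction_map_redProd
    (κ : Cardinal.{u}) (Λ S : Type u)
    (b : Λ → {s : Set Λ // #s < κ}) (hb : Function.Bijective b)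
    (U : Ultrafilter Λ)
    (hU : ∀ α : Λ, {γ : Λ | α ∈ (b γ : Set Λ)} ∈ (U : Filter Λ)) :
    Function.Injective
      (fun f : Λ → S =>
        (Quotient.mk (redSetoid U (fun α => (↥(b α : Set Λ) → S)))
          (fun α (γ : ↥(b α : Set Λ)) => f γ.1) :
          RedProd U (fun α => (↥(b α : Set Λ) → S)))) ∧
    #S ^ #Λ ≤ #(RedProd U (fun α => (↥(b α : Set Λ) → S))) := by
  have hinj : Function.Injective
      (fun f : Λ → S =>
        (Quotient.mk (redSetoid U (fun α => (↥(b α : Set Λ) → S)))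
          (fun α (γ : ↥(b α : Set Λ)) => f γ.1) :
          RedProd U (fun α => (↥(b α : Set Λ) → S)))) := by
    intro f g h
    have h' : {α | (fun γ : ↥(b α : Set Λ) => f γ.1) = fun γ => g γ.1}
        ∈ (U : Filter Λ) := Quotient.exact h
    funext α
    have := Filter.inter_mem h' (hU α)
    obtain ⟨γ, hγ1, hγ2⟩ := Filter.nonempty_of_mem this
    exact congrFun hγ1 ⟨α, hγ2⟩
  refine ⟨hinj, ?_⟩
  calc #S ^ #Λ = #(Λ → S) := (Cardinal.power_def ..).symm
    _ ≤ _ := Cardinal.mk_le_of_injective hinj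
end

section
/- Let κ be a nonzero cardinal, (S_i)_{i∈I} a family of sets with |S_i| ≤ κ for every i ∈ I, and D₁, …, D_k κ⁺-complete ultrafilters on I. Let D be the filter { Z ⊆ I : there exist Z_n ∈ D_n (n = 1, …, k) with Z₁ ∪ ⋯ ∪ Z_k ⊆ Z }. Then the reduced product ∏_{i∈I} S_i / D has cardinality at most κ^k. -/
universe u

open Cardinal

/-- Let `κ ≠ 0`, `(S_i)_{i∈I}` a family of sets with `|S_i| ≤ κ`, and
`D₁, …, D_k` `κ⁺`-complete ultrafilters on `I`. Let `D` be the filter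
`{ Z : ∃ Zₙ ∈ Dₙ with Z₁ ∪ ⋯ ∪ Z_k ⊆ Z }`. Then the reduced product `∏_i S_i / D`
(the quotient of `∏_i S_i` by the equivalence `x ~ y ↔ {i : x i = y i} ∈ D`) has
cardinality at most `κ^k`. -/
theorem mk_redProd_le_pow
    (κ : Cardinal.{u}) (hκ : κ ≠ 0) (I : Type u) (S : I → Type u)
    (hS : ∀ i : I, #(S i) ≤ κ) (k : ℕ) (D : Fin k → Ultrafilter I)
    (hD : ∀ t : Fin k, FilterComplete (D t : Filter I) (Order.succ κ)) :
    #(Quot (fun x y : ∀ i, S i => {i : I | x i = y i} ∈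
        {Z : Set I | ∃ Z' : Fin k → Set I,
          (∀ t : Fin k, Z' t ∈ (D t : Filter I)) ∧ (⋃ t : Fin k, Z' t) ⊆ Z}))
      ≤ κ ^ (k : Cardinal.{u}) := by
  classical
  set K := κ.out with hK
  have hSemb : ∀ i, Nonempty (S i ↪ K) := fun i => by
    rw [← Cardinal.le_def, Cardinal.mk_out]; exact hS i
  let f : ∀ i, S i ↪ K := fun i => (hSemb i).some
  -- membership in D is membership in every D t
  have hDmem : ∀ Z : Set I,
      (Z ∈ {Z : Set I | ∃ Z' : Fin k → Set I,
          (∀ t : Fin k, Z' t ∈ (D t : Filter I)) ∧ (⋃ t : Fin k, Z' t) ⊆ Z})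
        ↔ ∀ t : Fin k, Z ∈ (D t : Filter I) := by
    intro Z
    constructor
    · rintro ⟨Z', hZ', hsub⟩ t
      exact Filter.mem_of_superset (hZ' t)
        (subset_trans (Set.subset_iUnion Z' t) hsub)
    · intro h
      exact ⟨fun _ => Z, h, Set.iUnion_subset fun _ => subset_rfl⟩
  -- key: for each x and t, there is α with {i | f i (x i) = α} ∈ D t
  have key : ∀ (x : ∀ i, S i) (t : Fin k), ∃ α : K, {i | f i (x i) = α} ∈ (D t : Filter I) := by
    intro x t
    by_contra h
    push_neg at h
    have hmem : (⋂₀ (Set.range fun α : K => {i | f i (x i) ≠ α})) ∈ (D t : Filter I) := by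
      apply hD t
      · calc #(Set.range fun α : K => {i | f i (x i) ≠ α})
            ≤ #K := Cardinal.mk_range_le
          _ = κ := Cardinal.mk_out κ
          _ < Order.succ κ := Order.lt_succ κ
      · rintro s ⟨α, rfl⟩
        have : ({i | f i (x i) = α} : Set I)ᶜ ∈ (D t : Filter I) :=
          Ultrafilter.compl_mem_iff_notMem.mpr (h α)
        convert this using 1
        rfl
    have hempty : (⋂₀ (Set.range fun α : K => {i | f i (x i) ≠ α})) = ∅ := by
      ext i
      simp only [Set.sInter_range, Set.mem_iInter, Set.mem_setOf_eq, Set.mem_empty_iff_false,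
        iff_false, not_forall, not_not]
      exact ⟨f i (x i), rfl⟩
    rw [hempty] at hmem
    exact Filter.empty_notMem _ hmem
  choose Φ hΦ using key
  -- Φ respects the relation
  have hresp : ∀ x y : ∀ i, S i,
      ({i : I | x i = y i} ∈
        {Z : Set I | ∃ Z' : Fin k → Set I,
          (∀ t : Fin k, Z' t ∈ (D t : Filter I)) ∧ (⋃ t : Fin k, Z' t) ⊆ Z}) → Φ x = Φ y := by
    intro x y hxy
    funext t
    have h1 := hΦ x t
    have h2 := hΦ y t
    have h3 : {i : I | x i = y i} ∈ (D t : Filter I) := (hDmem _).1 hxy t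
    have h4 : ({i | f i (x i) = Φ x t} ∩ ({i : I | x i = y i} ∩ {i | f i (y i) = Φ y t}))
        ∈ (D t : Filter I) := Filter.inter_mem h1 (Filter.inter_mem h3 h2)
    obtain ⟨i, hi1, hi2, hi3⟩ := Filter.nonempty_of_mem h4
    simp only [Set.mem_setOf_eq] at hi1 hi2 hi3
    rw [← hi1, hi2, hi3]
  -- injective map to Fin k → K
  let F := Quot.lift Φ hresp
  have hinj : Function.Injective F := by
    rintro ⟨x⟩ ⟨y⟩ hxy
    have hxy' : Φ x = Φ y := hxy
    apply Quot.sound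
    rw [hDmem]
    intro t
    have h1 := hΦ x t
    have h2 := hΦ y t
    rw [hxy'] at h1
    refine Filter.mem_of_superset (Filter.inter_mem h1 h2) ?_
    rintro i ⟨hi1, hi2⟩
    simp only [Set.mem_setOf_eq] at hi1 hi2 ⊢
    exact (f i).injective (hi1.trans hi2.symm)
  calc #(Quot _) ≤ #(Fin k → K) := Cardinal.mk_le_of_injective hinj
    _ = κ ^ (k : Cardinal.{u}) := by
        rw [Cardinal.mk_arrow, Cardinal.mk_out, Cardinal.mk_fin, Cardinal.lift_natCast]
        simp
end

section
/- Let R be a ring, (U_i)_{i∈I} a family of left R-modules, D a filter on I, and ψ any pp-formula datum over R. Then ψ(Ker(π_D)) = Ker(π_D) ∩ ψ(∏_{i∈I} U_i); that is, the kernel Ker(π_D) of the canonical projection onto the reduced product is a pure submodule of ∏_{i∈I} U_i with respect to pp-formulas in one free variable. -/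
universe u

open Cardinal

/-- The kernel of the canonical projection `∏_{i∈I} U_i → ∏_{i∈I} U_i / D`: the
submodule of all `x` with `{ i : x i = 0 } ∈ D`. -/
def kerPi (R : Type u) [Ring R] {I : Type u} (U : I → Type u)
    [∀ i, AddCommGroup (U i)] [∀ i, Module R (U i)] (D : Filter I) :
    Submodule R (∀ i, U i) where
  carrier := {x | {i : I | x i = 0} ∈ D}
  zero_mem' := by
    have : {i : I | (0 : ∀ i, U i) i = 0} = Set.univ := by
      ext i; simp
    simp only [Set.mem_setOf_eq, this]
    exact D.univ_mem
  add_mem' := by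
    intro x y hx hy
    refine Filter.mem_of_superset (Filter.inter_mem hx hy) ?_
    rintro i ⟨h1, h2⟩
    simp only [Set.mem_setOf_eq] at h1 h2 ⊢
    simp [Pi.add_apply, h1, h2]
  smul_mem' := by
    intro c x hx
    refine Filter.mem_of_superset hx ?_
    intro i h
    simp only [Set.mem_setOf_eq] at h ⊢
    simp [Pi.smul_apply, h]

/-- For any pp-formula datum `ψ` and any filter `D` on `I`, the kernel
`Ker(π_D)` is pure in `∏_{i∈I} U_i` with respect to pp-formulas in one free variable:
`ψ(Ker(π_D)) = Ker(π_D) ∩ ψ(∏_{i∈I} U_i)`, where `ψ(Ker(π_D))` is computed in the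
module `Ker(π_D)` and viewed as a subset of `∏_{i∈I} U_i`. -/
theorem ppSet_kerPi_eq_inter
    (R : Type u) [Ring R] (ψ : PPFormula R) (I : Type u) (U : I → Type u)
    [∀ i, AddCommGroup (U i)] [∀ i, Module R (U i)] (D : Filter I) :
    Subtype.val '' (ψ.set (kerPi R U D)) =
      (kerPi R U D : Set (∀ i, U i)) ∩ ψ.set (∀ i, U i) := by
  ext m
  constructor
  · rintro ⟨⟨m, hm⟩, ⟨y, hy⟩, rfl⟩
    refine ⟨hm, fun i => (y i).1, fun j => ?_⟩
    have := congrArg Subtype.val (hy j)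
    simpa using this
  · rintro ⟨hm, y, hy⟩
    classical
    refine ⟨⟨m, hm⟩, ⟨fun i => ⟨fun t => if m t = 0 then 0 else y i t, ?_⟩, fun j => ?_⟩, rfl⟩
    · refine Filter.mem_of_superset hm (fun t ht => ?_)
      simp only [Set.mem_setOf_eq] at ht ⊢
      simp [ht]
    · apply Subtype.ext
      funext t
      by_cases h : m t = 0
      · simp [h]
      · have := congrFun (hy j) t
        simp only [Pi.add_apply, Pi.smul_apply, Pi.zero_apply, Finset.sum_apply] at this
        simpa [h] using this
end
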